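/- Fix U ∈ ℝ. There exist r₀ ≥ 2 and C > 0 such that: for every r ≥ r₀, the complex number s(r·e^{iπ/4}) = 1 + 1/(r·e^{iπ/4}) − U²/(r·e^{iπ/4})³ does not lie in (−∞, 0], and, defining ω_−(k) = (U − k²·√(s(k)))/(1 + 1/k) with the principal branch of the complex square root, for every t ∈ (0, 1] one has ∫_{r₀}^∞ |exp(−i·ω_−(r·e^{iπ/4})·t)|·(1/r) dr ≤ C·(1 + |log t|). -/

import Mathlib

open MeasureTheory

/-- The point `k = r·e^{iπ/4}` on the ray of argument `π/4`. -/
noncomputable def rayPt (r : ℝ) : ℂ := (r : ℂ) * Complex.exp (Complex.I * (Real.pi / 4))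

/-- The radicand `s(k) = 1 + 1/k − U²/k³`. -/
noncomputable def plateRad (U : ℝ) (k : ℂ) : ℂ := 1 + 1 / k - (U : ℂ) ^ 2 / k ^ 3

/-- The dispersion root `ω₋(k) = (U − k²√(s(k)))/(1+1/k)` (principal branch). -/
noncomputable def plateOmegaMC (U : ℝ) (k : ℂ) : ℂ :=
  ((U : ℂ) - k ^ 2 * plateRad U k ^ ((1 : ℂ) / 2)) / (1 + 1 / k)

lemma sq_half_cpow (s : ℂ) (hs : s ≠ 0) : (s ^ ((1:ℂ)/2))^2 = s := by
  rw [Complex.cpow_def_of_ne_zero hs, ← Complex.exp_nat_mul,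
    show ((2:ℕ):ℂ) * (Complex.log s * (1/2)) = Complex.log s by push_cast; ring]
  exact Complex.exp_log hs

lemma re_half_cpow_nonneg (s : ℂ) (hs : s ≠ 0) : 0 ≤ (s ^ ((1:ℂ)/2)).re := by
  rw [Complex.cpow_def_of_ne_zero hs, Complex.exp_re]
  have h1 : (Complex.log s * (1/2)).im = s.arg / 2 := by
    simp [Complex.log_im]; ring
  rw [h1]
  have h2 := Complex.arg_mem_Ioc s
  have hpi := Real.pi_pos
  have : 0 ≤ Real.cos (s.arg / 2) := by
    apply Real.cos_nonneg_of_mem_Icc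
    constructor <;> [linarith [h2.1]; linarith [h2.2]]
  positivity

lemma abs_rayPt (r : ℝ) (hr : 0 ≤ r) : ‖rayPt r‖ = r := by
  simp [rayPt, Complex.norm_exp, abs_of_nonneg hr]

lemma rayPt_sq (r : ℝ) : (rayPt r)^2 = (r:ℂ)^2 * Complex.I := by
  rw [rayPt, mul_pow, ← Complex.exp_nat_mul,
    show ((2:ℕ):ℂ) * (Complex.I * (Real.pi/4)) = (Real.pi/2) * Complex.I by push_cast; ring,
    Complex.exp_mul_I]
  simp

/-- Main pointwise estimate. -/
lemma key_est (U : ℝ) {r : ℝ} (hr : 8*(1+U^2) ≤ r) :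
    7/8 ≤ (plateRad U (rayPt r)).re ∧
    (plateOmegaMC U (rayPt r)).im ≤ 2*|U| - r^2/2 := by
  have hU2 : (0:ℝ) ≤ U^2 := sq_nonneg U
  have hr8 : (8:ℝ) ≤ r := by nlinarith
  have hrpos : (0:ℝ) < r := by linarith
  set k := rayPt r with hk
  have habsk : ‖k‖ = r := abs_rayPt r hrpos.le
  have hk0 : k ≠ 0 := by
    intro h; rw [h] at habsk; simp at habsk; linarith [habsk]
  set s := plateRad U k with hs
  -- |s - 1| ≤ 1/8
  have hs1 : ‖s - 1‖ ≤ 1/8 := by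
    have : s - 1 = 1/k - (U:ℂ)^2/k^3 := by rw [hs, plateRad]; ring
    rw [this]
    have h1 : ‖1/k‖ = 1/r := by rw [norm_div, habsk]; simp
    have h2 : ‖(U:ℂ)^2/k^3‖ = U^2/r^3 := by
      rw [norm_div, norm_pow, norm_pow, habsk, Complex.norm_real, Real.norm_eq_abs, sq_abs]
    have step : ‖1/k - (U:ℂ)^2/k^3‖
        ≤ ‖1/k‖ + ‖(U:ℂ)^2/k^3‖ := by
      have := norm_sub_le (1/k) ((U:ℂ)^2/k^3)
      exact this
    rw [h1, h2] at step
    have hr3 : r ≤ r^3 := by nlinarith [sq_nonneg (r-1), hrpos]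
    have h3 : U^2/r^3 ≤ U^2/r := div_le_div_of_nonneg_left hU2 hrpos hr3
    calc ‖1/k - (U:ℂ)^2/k^3‖ ≤ 1/r + U^2/r^3 := step
      _ ≤ 1/r + U^2/r := by linarith
      _ = (1+U^2)/r := by ring
      _ ≤ 1/8 := by rw [div_le_div_iff₀ hrpos (by norm_num)]; linarith
  have hsre : 7/8 ≤ s.re := by
    have h1 : (s - 1).re ≥ -(1/8) := by
      have := Complex.abs_re_le_norm (s-1)
      have := abs_le.mp (le_trans this hs1)
      linarith [this.1]
    have : (s-1).re = s.re - 1 := by simp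
    linarith
  have hs0 : s ≠ 0 := by
    intro h; rw [h] at hsre; norm_num at hsre
  set q := s ^ ((1:ℂ)/2) with hq
  have hq2 : q^2 = s := sq_half_cpow s hs0
  have hqre : 0 ≤ q.re := re_half_cpow_nonneg s hs0
  -- |q - 1| ≤ |s - 1|
  have hq1 : ‖q - 1‖ ≤ 1/8 := by
    have hfac : (q - 1) * (q + 1) = s - 1 := by rw [← hq2]; ring
    have habs : ‖q-1‖ * ‖q+1‖ = ‖s-1‖ := by
      rw [← norm_mul, hfac]
    have h1 : 1 ≤ ‖q + 1‖ := by
      have h2 : 1 ≤ ‖q+1‖^2 := by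
        rw [Complex.sq_norm, Complex.normSq_apply]
        simp only [Complex.add_re, Complex.add_im, Complex.one_re, Complex.one_im]
        nlinarith [sq_nonneg (q.im)]
      nlinarith [norm_nonneg (q+1)]
    calc ‖q-1‖ = ‖q-1‖ * 1 := by ring
      _ ≤ ‖q-1‖ * ‖q+1‖ :=
          mul_le_mul_of_nonneg_left h1 (norm_nonneg _)
      _ = ‖s-1‖ := habs
      _ ≤ 1/8 := hs1
  set d := 1 + 1/k with hd
  have hd1 : ‖d - 1‖ ≤ 1/8 := by
    have : d - 1 = 1/k := by rw [hd]; ring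
    rw [this, norm_div, habsk]
    simp only [norm_one]
    rw [div_le_div_iff₀ hrpos (by norm_num)]; linarith
  have hdabs : 7/8 ≤ ‖d‖ := by
    have h := norm_sub_norm_le (1:ℂ) (1 - d)
    simp only [norm_one, show (1:ℂ) - (1 - d) = d by ring] at h
    have h1 : ‖1 - d‖ = ‖d - 1‖ := by
      rw [← norm_neg]; ring_nf
    rw [h1] at h
    linarith
  have hd0 : d ≠ 0 := by
    intro h; rw [h] at hdabs; simp at hdabs; linarith
  have hdinv : ‖d⁻¹‖ ≤ 8/7 := by
    rw [norm_inv]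
    rw [inv_le_comm₀ (by linarith) (by norm_num)]
    linarith
  have hdinv1 : ‖d⁻¹ - 1‖ ≤ 1/7 := by
    have : d⁻¹ - 1 = (1 - d) * d⁻¹ := by field_simp
    rw [this, norm_mul, norm_inv]
    have h1 : ‖1 - d‖ ≤ 1/8 := by rw [← norm_neg]; simpa using hd1
    calc ‖1-d‖ * (‖d‖)⁻¹ ≤ (1/8) * (8/7) := by
          apply mul_le_mul h1 _ (by positivity) (by norm_num)
          rw [inv_le_comm₀ (by linarith) (by norm_num)]; linarith
      _ = 1/7 := by norm_num
  set w := q * d⁻¹ with hw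
  have hwre : 1/2 ≤ w.re := by
    have h1 : ‖w - 1‖ ≤ 2/7 := by
      have : w - 1 = (q - 1) * d⁻¹ + (d⁻¹ - 1) := by rw [hw]; ring
      rw [this]
      calc ‖(q-1)*d⁻¹ + (d⁻¹-1)‖
          ≤ ‖(q-1)*d⁻¹‖ + ‖d⁻¹-1‖ := norm_add_le _ _
        _ = ‖q-1‖ * ‖d⁻¹‖ + ‖d⁻¹-1‖ := by rw [norm_mul]
        _ ≤ (1/8)*(8/7) + 1/7 := by
            have := mul_le_mul hq1 hdinv (norm_nonneg _) (by norm_num)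
            linarith
        _ = 2/7 := by norm_num
    have h2 : (w - 1).re ≥ -(2/7) := by
      have := Complex.abs_re_le_norm (w-1)
      have := abs_le.mp (le_trans this h1)
      linarith [this.1]
    have : (w-1).re = w.re - 1 := by simp
    linarith
  refine ⟨hsre, ?_⟩
  have hω : plateOmegaMC U k = (U:ℂ) * d⁻¹ - Complex.I * ((r:ℂ)^2 * w) := by
    rw [plateOmegaMC, ← hs, ← hq, ← hd, div_eq_mul_inv, rayPt_sq, hw]
    ring
  have him : (plateOmegaMC U k).im = U * (d⁻¹).im - r^2 * w.re := by
    rw [hω]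
    simp [Complex.mul_im, Complex.mul_re, ← Complex.ofReal_pow]
  rw [him]
  have h3 : U * (d⁻¹).im ≤ 2*|U| := by
    calc U * (d⁻¹).im ≤ |U * (d⁻¹).im| := le_abs_self _
      _ = |U| * |(d⁻¹).im| := abs_mul _ _
      _ ≤ |U| * ‖d⁻¹‖ := by gcongr; exact Complex.abs_im_le_norm _
      _ ≤ |U| * 2 := by gcongr; linarith
      _ = 2*|U| := by ring
  have h4 : r^2/2 ≤ r^2 * w.re := by nlinarith
  linarith

lemma rayPt_ne_zero {r : ℝ} (hr : 0 < r) : rayPt r ≠ 0 := by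
  intro h
  have := abs_rayPt r hr.le
  rw [h] at this; simp at this; linarith

lemma d_ne_zero (U : ℝ) {r : ℝ} (hr : 8*(1+U^2) ≤ r) : (1 + 1/(rayPt r)) ≠ 0 := by
  have hU2 : (0:ℝ) ≤ U^2 := sq_nonneg U
  have hr8 : (8:ℝ) ≤ r := by nlinarith
  have hrpos : (0:ℝ) < r := by linarith
  intro h
  have h1 : ‖1/(rayPt r)‖ = 1/r := by
    rw [norm_div, abs_rayPt r hrpos.le]; simp
  have h2 : (1:ℂ)/(rayPt r) = -1 := by linear_combination h
  rw [h2] at h1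
  simp at h1
  linarith

lemma abs_exp_le (U : ℝ) {r t : ℝ} (hr : 8*(1+U^2) ≤ r) (ht : 0 < t) (ht1 : t ≤ 1) :
    ‖Complex.exp (-Complex.I * plateOmegaMC U (rayPt r) * (t:ℂ))‖
      ≤ Real.exp (2*|U|) * Real.exp (-(t*r)) := by
  have hU2 : (0:ℝ) ≤ U^2 := sq_nonneg U
  have hr8 : (8:ℝ) ≤ r := by nlinarith
  rw [Complex.norm_exp, ← Real.exp_add]
  apply Real.exp_le_exp.mpr
  have hre : (-Complex.I * plateOmegaMC U (rayPt r) * (t:ℂ)).re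
      = (plateOmegaMC U (rayPt r)).im * t := by
    simp [Complex.mul_re, Complex.mul_im]
  rw [hre]
  have h2 := (key_est U hr).2
  have hU : (0:ℝ) ≤ |U| := abs_nonneg U
  nlinarith [mul_le_mul_of_nonneg_right h2 ht.le,
    mul_nonneg (mul_nonneg ht.le (by linarith : (0:ℝ) ≤ r)) (by linarith : (0:ℝ) ≤ r - 2),
    mul_nonneg (by linarith : (0:ℝ) ≤ 1 - t) hU]

/-- logarithmic estimate along the ray `arg k = π/4` with weight `1/r`:
there are `r₀ ≥ 2`, `C > 0` such that the radicand avoids `(−∞,0]` on the ray beyond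
`r₀` and for all `t ∈ (0,1]`,
`∫_{r₀}^∞ |e^{−iω₋(re^{iπ/4})t}|·(1/r) dr ≤ C·(1 + |log t|)`. -/
theorem forcing_log_estimate (U : ℝ) :
    ∃ r₀ : ℝ, 2 ≤ r₀ ∧ ∃ C : ℝ, 0 < C ∧
      (∀ r : ℝ, r₀ ≤ r →
        ¬ ((plateRad U (rayPt r)).im = 0 ∧ (plateRad U (rayPt r)).re ≤ 0))
      ∧ ∀ t : ℝ, 0 < t → t ≤ 1 →
        IntegrableOn
          (fun r => ‖Complex.exp (-Complex.I * plateOmegaMC U (rayPt r) * (t : ℂ))‖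
            * (1 / r))
          (Set.Ioi r₀)
        ∧ ∫ r in Set.Ioi r₀,
            ‖Complex.exp (-Complex.I * plateOmegaMC U (rayPt r) * (t : ℂ))‖ * (1 / r)
          ≤ C * (1 + |Real.log t|) := by
  have hU2 : (0:ℝ) ≤ U^2 := sq_nonneg U
  set r₀ : ℝ := 8*(1+U^2) with hr₀def
  have hr₀8 : (8:ℝ) ≤ r₀ := by rw [hr₀def]; nlinarith
  have hr₀pos : (0:ℝ) < r₀ := by linarith
  set B : ℝ := Real.exp (2*|U|) with hB
  have hBpos : 0 < B := Real.exp_pos _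
  have hlogr₀ : 0 ≤ Real.log r₀ := Real.log_nonneg (by linarith)
  refine ⟨r₀, by linarith, B*(1+Real.log r₀) + B, by positivity, ?_, ?_⟩
  · rintro r hrr ⟨-, hre⟩
    have := (key_est U hrr).1
    linarith
  · intro t ht ht1
    set f : ℝ → ℝ := fun r =>
      ‖Complex.exp (-Complex.I * plateOmegaMC U (rayPt r) * (t:ℂ))‖ * (1/r) with hf
    have hbd : ∀ r ∈ Set.Ioi r₀, f r ≤ B * Real.exp (-(t*r)) * (1/r) := by
      intro r hr
      have hrr : r₀ ≤ r := le_of_lt hr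
      have hrpos : (0:ℝ) < r := lt_of_lt_of_le hr₀pos hrr
      have := abs_exp_le U hrr ht ht1
      have h1r : (0:ℝ) ≤ 1/r := by positivity
      exact mul_le_mul_of_nonneg_right this h1r
    have hfnonneg : ∀ r ∈ Set.Ioi r₀, 0 ≤ f r := by
      intro r hr
      have hrpos : (0:ℝ) < r := lt_of_lt_of_le hr₀pos hr.le
      positivity
    -- continuity of f on Ioi r₀
    have hkc : Continuous rayPt := by
      unfold rayPt; exact Complex.continuous_ofReal.mul continuous_const
    have hkne : ∀ r ∈ Set.Ioi r₀, rayPt r ≠ 0 := fun r hr =>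
      rayPt_ne_zero (lt_of_lt_of_le hr₀pos hr.le)
    have hrad : ContinuousOn (fun r => plateRad U (rayPt r)) (Set.Ioi r₀) := by
      unfold plateRad
      exact (continuousOn_const.add
        (continuousOn_const.div hkc.continuousOn hkne)).sub
        (continuousOn_const.div ((hkc.pow 3).continuousOn)
          (fun r hr => pow_ne_zero 3 (hkne r hr)))
    have hq : ContinuousOn (fun r => plateRad U (rayPt r) ^ ((1:ℂ)/2)) (Set.Ioi r₀) := by
      apply hrad.cpow_const
      intro r hr
      rw [Complex.mem_slitPlane_iff]
      left
      have := (key_est U hr.le).1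
      linarith
    have homega : ContinuousOn (fun r => plateOmegaMC U (rayPt r)) (Set.Ioi r₀) := by
      unfold plateOmegaMC
      exact (continuousOn_const.sub (((hkc.pow 2).continuousOn).mul hq)).div
        (continuousOn_const.add (continuousOn_const.div hkc.continuousOn hkne))
        (fun r hr => d_ne_zero U hr.le)
    have hcont : ContinuousOn f (Set.Ioi r₀) := by
      apply ContinuousOn.mul
      · exact continuous_norm.comp_continuousOn
          (Complex.continuous_exp.comp_continuousOn
            ((continuousOn_const.mul homega).mul continuousOn_const))
      · exact continuousOn_const.div continuousOn_id
          (fun r hr => ne_of_gt (lt_of_lt_of_le hr₀pos hr.le))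
    have hfm : AEStronglyMeasurable f (volume.restrict (Set.Ioi r₀)) :=
      hcont.aestronglyMeasurable measurableSet_Ioi
    -- integrability
    have hint : IntegrableOn f (Set.Ioi r₀) := by
      apply Integrable.mono' (((exp_neg_integrableOn_Ioi r₀ ht).const_mul (B/r₀))) hfm
      filter_upwards [ae_restrict_mem measurableSet_Ioi] with r hr
      have hrpos : (0:ℝ) < r := lt_of_lt_of_le hr₀pos hr.le
      rw [Real.norm_eq_abs, abs_of_nonneg (hfnonneg r hr)]
      calc f r ≤ B * Real.exp (-(t*r)) * (1/r) := hbd r hr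
        _ ≤ B * Real.exp (-(t*r)) * (1/r₀) := by
            gcongr
            exact hr.le
        _ = B / r₀ * Real.exp (-t * r) := by rw [neg_mul]; ring
    refine ⟨hint, ?_⟩
    -- split the integral
    set M : ℝ := max r₀ (1/t) with hM
    have hr₀M : r₀ ≤ M := le_max_left _ _
    have hMpos : 0 < M := lt_of_lt_of_le hr₀pos hr₀M
    have h1M : 1/M ≤ t := by
      have h := le_max_right r₀ (1/t)
      rw [div_le_iff₀ hMpos]
      rw [div_le_iff₀ ht] at h
      nlinarith
    have hsplit : Set.Ioc r₀ M ∪ Set.Ioi M = Set.Ioi r₀ := Set.Ioc_union_Ioi_eq_Ioi hr₀M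
    have hint1 : IntegrableOn f (Set.Ioc r₀ M) :=
      hint.mono_set (by rw [← hsplit]; exact Set.subset_union_left)
    have hint2 : IntegrableOn f (Set.Ioi M) :=
      hint.mono_set (Set.Ioi_subset_Ioi hr₀M)
    have hsum : ∫ r in Set.Ioi r₀, f r
        = (∫ r in Set.Ioc r₀ M, f r) + ∫ r in Set.Ioi M, f r := by
      rw [← hsplit, setIntegral_union (Set.Ioc_disjoint_Ioi le_rfl) measurableSet_Ioi hint1 hint2]
    -- first piece
    have hgint1 : IntegrableOn (fun r => B * (1/r)) (Set.Ioc r₀ M) := by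
      rw [← intervalIntegrable_iff_integrableOn_Ioc_of_le hr₀M]
      apply ContinuousOn.intervalIntegrable
      apply continuousOn_const.mul
      apply continuousOn_const.div continuousOn_id
      intro x hx
      rw [Set.uIcc_of_le hr₀M] at hx
      exact ne_of_gt (lt_of_lt_of_le hr₀pos hx.1)
    have hpiece1 : ∫ r in Set.Ioc r₀ M, f r ≤ B * (Real.log r₀ + |Real.log t|) := by
      have hmono : ∫ r in Set.Ioc r₀ M, f r ≤ ∫ r in Set.Ioc r₀ M, B * (1/r) := by
        apply setIntegral_mono_on hint1 hgint1 measurableSet_Ioc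
        intro r hr
        have hrpos : (0:ℝ) < r := lt_of_lt_of_le hr₀pos hr.1.le
        calc f r ≤ B * Real.exp (-(t*r)) * (1/r) := hbd r hr.1
          _ ≤ B * 1 * (1/r) := by
              gcongr
              exact Real.exp_le_one_iff.mpr (by nlinarith)
          _ = B * (1/r) := by ring
      have hval : ∫ r in Set.Ioc r₀ M, B * (1/r) = B * (Real.log M - Real.log r₀) := by
        rw [← intervalIntegral.integral_of_le hr₀M, intervalIntegral.integral_const_mul,
          integral_one_div (by rw [Set.uIcc_of_le hr₀M]; intro h; linarith [h.1] : (0:ℝ) ∉ Set.uIcc r₀ M),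
          Real.log_div (by linarith) (by linarith)]
      have hlogM : Real.log M ≤ Real.log r₀ + |Real.log t| := by
        have habs : |Real.log t| = -Real.log t := abs_of_nonpos (Real.log_nonpos ht.le ht1)
        have hMle : M ≤ r₀ * (1/t) := by
          have h1t : (1:ℝ) ≤ 1/t := by rw [le_div_iff₀ ht]; linarith
          apply max_le
          · exact le_mul_of_one_le_right hr₀pos.le h1t
          · nlinarith
        calc Real.log M ≤ Real.log (r₀ * (1/t)) :=
              Real.log_le_log hMpos hMle
          _ = Real.log r₀ + Real.log (1/t) := Real.log_mul (by linarith) (by positivity)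
          _ = Real.log r₀ + |Real.log t| := by rw [one_div, Real.log_inv, habs]
      calc ∫ r in Set.Ioc r₀ M, f r ≤ B * (Real.log M - Real.log r₀) := by rw [← hval]; exact hmono
        _ ≤ B * (Real.log r₀ + |Real.log t|) := by nlinarith
    -- second piece
    have hgint2 : IntegrableOn (fun r => B * t * Real.exp (-(t*r))) (Set.Ioi M) := by
      have := (exp_neg_integrableOn_Ioi M ht).const_mul (B*t)
      simpa [neg_mul, IntegrableOn] using this
    have hpiece2 : ∫ r in Set.Ioi M, f r ≤ B := by
      have hmono : ∫ r in Set.Ioi M, f r ≤ ∫ r in Set.Ioi M, B * t * Real.exp (-(t*r)) := by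
        apply setIntegral_mono_on hint2 hgint2 measurableSet_Ioi
        intro r hr
        have hrM : M < r := hr
        have hrpos : (0:ℝ) < r := lt_trans hMpos hrM
        have h1rt : 1/r ≤ t := by
          apply le_trans _ h1M
          rw [div_le_div_iff₀ hrpos hMpos]
          nlinarith
        calc f r ≤ B * Real.exp (-(t*r)) * (1/r) := hbd r (lt_of_le_of_lt hr₀M hrM)
          _ ≤ B * Real.exp (-(t*r)) * t := by gcongr
          _ = B * t * Real.exp (-(t*r)) := by ring
      have hval : ∫ r in Set.Ioi M, B * t * Real.exp (-(t*r)) = B * Real.exp (-(t*M)) := by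
        rw [MeasureTheory.integral_const_mul]
        have h := integral_comp_mul_left_Ioi (fun x => Real.exp (-x)) M ht
        simp only [smul_eq_mul] at h
        rw [h, integral_exp_neg_Ioi]
        field_simp
      calc ∫ r in Set.Ioi M, f r ≤ B * Real.exp (-(t*M)) := by rw [← hval]; exact hmono
        _ ≤ B * 1 := by
            gcongr
            exact Real.exp_le_one_iff.mpr (by nlinarith)
        _ = B := by ring
    have habs0 : 0 ≤ |Real.log t| := abs_nonneg _
    calc ∫ r in Set.Ioi r₀, f r = (∫ r in Set.Ioc r₀ M, f r) + ∫ r in Set.Ioi M, f r := hsum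
      _ ≤ B * (Real.log r₀ + |Real.log t|) + B := by linarith
      _ ≤ (B*(1+Real.log r₀) + B) * (1 + |Real.log t|) := by
          nlinarith [mul_nonneg (mul_nonneg hBpos.le hlogr₀) habs0, mul_nonneg hBpos.le habs0]
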